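/- Structural ends give initial algebras: let T : Set → Set be a functor, and suppose the set μ_T of families φ assigning to each T-algebra (X, u : T X → X) an element φ_{(X,u)} ∈ X, commuting with all T-algebra homomorphisms, exists as a set. Then μ_T carries a T-algebra structure in_T(ω) := λ (X,u). u(T(λ φ. φ_{(X,u)})(ω)), and (μ_T, in_T) is an initial T-algebra: for every T-algebra (X,u) the map φ ↦ φ_{(X,u)} is the unique T-algebra homomorphism μ_T → X. -/

import Mathlib

open CategoryTheory

universe u

/-- Structural ends give initial algebras: if the set of wedges over the `T`-algebraic
difunctor exists as a (small) set `μ` (witnessed by the equivalence `e`), then `μ`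
carries a `T`-algebra structure `in_T(ω) = λ (X,u). u(T(fold_u)(ω))` making it an
initial `T`-algebra: for every `T`-algebra `(X,u)`, `fold_u := φ ↦ φ_{(X,u)}` is the
unique `T`-algebra homomorphism `μ → X`. -/
theorem structuralEnd_initial_algebra (T : Type u ⥤ Type u) (μ : Type u)
    (e : μ ≃ {φ : ∀ (X : Type u) (_ : T.obj X → X), X //
      ∀ (X Y : Type u) (u : T.obj X → X) (v : T.obj Y → Y) (f : X → Y),
        f ∘ u = v ∘ T.map (TypeCat.ofHom f) → f (φ X u) = φ Y v}) :
    ∃ inT : T.obj μ → μ,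
      (∀ (ω : T.obj μ) (X : Type u) (u : T.obj X → X),
        (e (inT ω)).1 X u = u (T.map (TypeCat.ofHom (fun m => (e m).1 X u)) ω)) ∧
      (∀ (X : Type u) (u : T.obj X → X),
        ((fun m => (e m).1 X u) ∘ inT = u ∘ T.map (TypeCat.ofHom (fun m => (e m).1 X u))) ∧
        (∀ g : μ → X, g ∘ inT = u ∘ T.map (TypeCat.ofHom g) → g = fun m => (e m).1 X u)) := by
  -- the algebra structure
  refine ⟨fun ω => e.symm ⟨fun X u => u (T.map (TypeCat.ofHom (fun m => (e m).1 X u)) ω), ?_⟩, ?_, ?_⟩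
  · intro X Y u v f hf
    have hfold : f ∘ (fun m => (e m).1 X u) = fun m => (e m).1 Y v := by
      funext m
      exact (e m).2 X Y u v f hf
    have := congrFun hf (T.map (TypeCat.ofHom (fun m => (e m).1 X u)) ω)
    simp only [Function.comp_apply] at this
    rw [this]
    congr 1
    have : T.map (TypeCat.ofHom f) (T.map (TypeCat.ofHom (fun m => (e m).1 X u)) ω)
        = T.map (TypeCat.ofHom (f ∘ fun m => (e m).1 X u)) ω := by
      rw [← types_comp_apply, ← T.map_comp]; rfl
    rw [this, hfold]
  · intro ω X u
    rw [Equiv.apply_symm_apply]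
  · intro X u
    set inT : T.obj μ → μ :=
      fun ω => e.symm ⟨fun X u => u (T.map (TypeCat.ofHom (fun m => (e m).1 X u)) ω), _⟩ with hinT
    have key : ∀ (ω : T.obj μ) (X : Type u) (u : T.obj X → X),
        (e (inT ω)).1 X u = u (T.map (TypeCat.ofHom (fun m => (e m).1 X u)) ω) := by
      intro ω X u; rw [hinT, Equiv.apply_symm_apply]
    have hom : ∀ (X : Type u) (u : T.obj X → X),
        (fun m => (e m).1 X u) ∘ inT = u ∘ T.map (TypeCat.ofHom (fun m => (e m).1 X u)) := by
      intro X u; funext ω; exact key ω X u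
    refine ⟨hom X u, ?_⟩
    -- fold over (μ, inT) is the identity
    have hid : ∀ m : μ, (e m).1 μ inT = m := by
      intro m
      apply e.injective
      ext Y v
      exact (e m).2 μ Y inT v _ (hom Y v)
    intro g hg
    funext m
    have := (e m).2 μ X inT u g hg
    rw [hid m] at this
    exact this
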